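/- arXiv:2308.00347 — 3 statements merged into one kernel-verified Lean document; each statement's English description precedes it below -/
import Mathlib

section
/- Let φ be a Bernstein function with representation φ(λ) = bλ + ∫₀^∞ (1 - e^{-λt}) μ(dt), where b ≥ 0 and μ is a nonnegative measure on (0,∞) with ∫₀^∞ (1 ∧ t) μ(dt) < ∞. Then for every n ∈ ℕ there is a constant C(n) such that λ^n |φ^{(n)}(λ)| ≤ C(n) φ(λ) for all λ > 0. -/
open Set Filter MeasureTheory Real

namespace BernsteinAux

lemma one_sub_exp_nonneg {x : ℝ} (hx : 0 ≤ x) : 0 ≤ 1 - Real.exp (-x) := by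
  have h : Real.exp (-x) ≤ 1 := Real.exp_le_one_iff.2 (by linarith)
  linarith

lemma sub_exp_le_min {x : ℝ} (hx : 0 < x) : 1 - Real.exp (-x) ≤ min 1 x := by
  refine le_min (by linarith [Real.exp_pos (-x)]) ?_
  linarith [Real.add_one_le_exp (-x)]

lemma min1_bound {l t : ℝ} (hl : 0 < l) (ht : 0 < t) :
    min 1 (l * t) ≤ max 1 l * min 1 t := by
  rcases le_total t 1 with h | h
  · rw [min_eq_right h]
    calc min 1 (l * t) ≤ l * t := min_le_right _ _
      _ ≤ max 1 l * t := mul_le_mul_of_nonneg_right (le_max_right 1 l) ht.le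
  · rw [min_eq_left h, mul_one]
    exact (min_le_left 1 (l * t)).trans (le_max_left 1 l)

lemma pow_exp_le_min (n : ℕ) (hn : 1 ≤ n) {x : ℝ} (hx : 0 < x) :
    x ^ n * Real.exp (-x) ≤ n.factorial * min 1 x := by
  have hf : (1 : ℝ) ≤ n.factorial := by exact_mod_cast n.factorial_pos
  rcases le_total x 1 with h | h
  · rw [min_eq_right h]
    have h1 : x ^ n ≤ x := by
      calc x ^ n ≤ x ^ 1 := pow_le_pow_of_le_one hx.le h hn
        _ = x := pow_one x
    have h2 : Real.exp (-x) ≤ 1 := Real.exp_le_one_iff.2 (by linarith)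
    nlinarith [pow_nonneg hx.le n, Real.exp_pos (-x)]
  · rw [min_eq_left h]
    have h1 : x ^ n / n.factorial ≤ Real.exp x :=
      Real.pow_div_factorial_le_exp x (by linarith) n
    have hfpos : (0 : ℝ) < n.factorial := by linarith
    have h2 : x ^ n ≤ Real.exp x * n.factorial := (div_le_iff₀ hfpos).1 h1
    rw [mul_one, Real.exp_neg]
    rw [mul_inv_le_iff₀ (Real.exp_pos x)]
    linarith

lemma min_le_two_sub {x : ℝ} (hx : 0 < x) : min 1 x ≤ 2 * (1 - Real.exp (-x)) := by
  rcases le_total x 1 with h | h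
  · rw [min_eq_right h]
    have hpos : (0 : ℝ) < 1 + x := by linarith
    have h1 : Real.exp (-x) ≤ 1 / (1 + x) := by
      rw [Real.exp_neg, ← one_div]
      exact one_div_le_one_div_of_le hpos (by linarith [Real.add_one_le_exp x])
    have h2 : 1 - 1 / (1 + x) = x / (1 + x) := by field_simp; ring
    have h3 : x / 2 ≤ x / (1 + x) := by
      apply div_le_div_of_nonneg_left hx.le hpos (by linarith)
    have h4 : x / (1 + x) ≤ 1 - Real.exp (-x) := by linarith
    linarith
  · rw [min_eq_left h]
    have h1 : Real.exp (-x) ≤ Real.exp (-1) := Real.exp_le_exp.2 (by linarith)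
    have h2 : Real.exp (-1 : ℝ) ≤ 1 / 2 := by
      rw [Real.exp_neg, ← one_div]
      exact one_div_le_one_div_of_le two_pos (by linarith [Real.add_one_le_exp (1 : ℝ)])
    linarith

variable (μ : Measure ℝ)

lemma integrable_min (hμ : ∫⁻ t in Ioi (0 : ℝ), ENNReal.ofReal (min 1 t) ∂μ ≠ ⊤) :
    Integrable (fun t => min 1 t) (μ.restrict (Ioi 0)) := by
  refine ⟨(continuous_const.min continuous_id).aestronglyMeasurable, ?_⟩
  rw [hasFiniteIntegral_iff_ofReal]
  · exact hμ.lt_top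
  · exact (ae_restrict_iff' measurableSet_Ioi).2
      (Eventually.of_forall fun t ht => le_min zero_le_one (le_of_lt ht))

lemma integrable_of_le_min (hμ : ∫⁻ t in Ioi (0 : ℝ), ENNReal.ofReal (min 1 t) ∂μ ≠ ⊤)
    {f : ℝ → ℝ} (hf : Continuous f) (C : ℝ)
    (hC : ∀ t ∈ Ioi (0 : ℝ), ‖f t‖ ≤ C * min 1 t) :
    Integrable f (μ.restrict (Ioi 0)) := by
  refine Integrable.mono' ((integrable_min μ hμ).const_mul C) hf.aestronglyMeasurable ?_
  exact (ae_restrict_iff' measurableSet_Ioi).2 (Eventually.of_forall hC)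

lemma integrable_pow_exp (hμ : ∫⁻ t in Ioi (0 : ℝ), ENNReal.ofReal (min 1 t) ∂μ ≠ ⊤)
    (n : ℕ) (hn : 1 ≤ n) {l : ℝ} (hl : 0 < l) :
    Integrable (fun t => t ^ n * Real.exp (-(l * t))) (μ.restrict (Ioi 0)) := by
  apply integrable_of_le_min μ hμ (by continuity) ((n.factorial * max 1 l) / l ^ n)
  intro t ht
  have ht : 0 < t := ht
  have key := pow_exp_le_min n hn (mul_pos hl ht)
  have key2 := min1_bound hl ht
  have hln : (0 : ℝ) < l ^ n := pow_pos hl n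
  have hfnn : (0 : ℝ) ≤ n.factorial := by positivity
  rw [Real.norm_eq_abs, abs_of_nonneg (by positivity)]
  have e1 : t ^ n * Real.exp (-(l * t)) = ((l * t) ^ n * Real.exp (-(l * t))) / l ^ n := by
    rw [mul_pow]; field_simp
  rw [e1]
  calc ((l * t) ^ n * Real.exp (-(l * t))) / l ^ n
      ≤ (n.factorial * min 1 (l * t)) / l ^ n := by gcongr
    _ ≤ (n.factorial * (max 1 l * min 1 t)) / l ^ n := by gcongr
    _ = n.factorial * max 1 l / l ^ n * min 1 t := by ring

lemma integrable_one_sub_exp (hμ : ∫⁻ t in Ioi (0 : ℝ), ENNReal.ofReal (min 1 t) ∂μ ≠ ⊤)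
    {l : ℝ} (hl : 0 < l) :
    Integrable (fun t => 1 - Real.exp (-(l * t))) (μ.restrict (Ioi 0)) := by
  apply integrable_of_le_min μ hμ (by continuity) (max 1 l)
  intro t ht
  have ht : 0 < t := ht
  rw [Real.norm_eq_abs, abs_of_nonneg (one_sub_exp_nonneg (by positivity))]
  exact (sub_exp_le_min (mul_pos hl ht)).trans (min1_bound hl ht)

lemma hasDerivAt_int_pow (hμ : ∫⁻ t in Ioi (0 : ℝ), ENNReal.ofReal (min 1 t) ∂μ ≠ ⊤)
    (n : ℕ) (hn : 1 ≤ n) {l : ℝ} (hl : 0 < l) :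
    HasDerivAt (fun x => ∫ t in Ioi (0 : ℝ), t ^ n * Real.exp (-(x * t)) ∂μ)
      (∫ t in Ioi (0 : ℝ), -(t ^ (n + 1) * Real.exp (-(l * t))) ∂μ) l := by
  have h := hasDerivAt_integral_of_dominated_loc_of_deriv_le
      (F := fun (x : ℝ) (t : ℝ) => t ^ n * Real.exp (-(x * t)))
      (F' := fun (x : ℝ) (t : ℝ) => -(t ^ (n + 1) * Real.exp (-(x * t))))
      (x₀ := l) (bound := fun t => t ^ (n + 1) * Real.exp (-((l / 2) * t)))
      (μ := μ.restrict (Ioi 0)) (Metric.ball_mem_nhds l (half_pos hl))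
      (Eventually.of_forall fun x => (by continuity : Continuous
        (fun t : ℝ => t ^ n * Real.exp (-(x * t)))).aestronglyMeasurable)
      (integrable_pow_exp μ hμ n hn hl)
      ((by continuity : Continuous
        (fun t : ℝ => -(t ^ (n + 1) * Real.exp (-(l * t))))).aestronglyMeasurable)
      ?_ (integrable_pow_exp μ hμ (n + 1) (by omega) (half_pos hl)) ?_
  · exact h.2
  · refine (ae_restrict_iff' measurableSet_Ioi).2 (Eventually.of_forall fun t ht x hx => ?_)
    have ht : 0 < t := ht
    have hx2 : l / 2 ≤ x := by
      have h1 : |x - l| < l / 2 := by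
        have := mem_ball_iff_norm.1 hx
        simpa [Real.norm_eq_abs] using this
      linarith [(abs_lt.1 h1).1]
    rw [norm_neg, Real.norm_eq_abs, abs_of_nonneg (by positivity)]
    have : Real.exp (-(x * t)) ≤ Real.exp (-(l / 2 * t)) :=
      Real.exp_le_exp.2 (by nlinarith)
    exact mul_le_mul_of_nonneg_left this (by positivity)
  · refine Eventually.of_forall fun t x _ => ?_
    have h1 : HasDerivAt (fun x : ℝ => -(x * t)) (-t) x := by
      simpa using ((hasDerivAt_id x).mul_const t).fun_neg
    have h2 := HasDerivAt.const_mul (t ^ n) h1.exp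
    convert h2 using 1
    · rfl
    · ring

lemma hasDerivAt_phi_repr (hμ : ∫⁻ t in Ioi (0 : ℝ), ENNReal.ofReal (min 1 t) ∂μ ≠ ⊤)
    (b : ℝ) {l : ℝ} (hl : 0 < l) :
    HasDerivAt (fun x => b * x + ∫ t in Ioi (0 : ℝ), (1 - Real.exp (-(x * t))) ∂μ)
      (b + ∫ t in Ioi (0 : ℝ), t ^ 1 * Real.exp (-(l * t)) ∂μ) l := by
  have h := hasDerivAt_integral_of_dominated_loc_of_deriv_le
      (F := fun (x : ℝ) (t : ℝ) => 1 - Real.exp (-(x * t)))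
      (F' := fun (x : ℝ) (t : ℝ) => t ^ 1 * Real.exp (-(x * t)))
      (x₀ := l) (bound := fun t => t ^ 1 * Real.exp (-((l / 2) * t)))
      (μ := μ.restrict (Ioi 0)) (Metric.ball_mem_nhds l (half_pos hl))
      (Eventually.of_forall fun x => (by continuity : Continuous
        (fun t : ℝ => 1 - Real.exp (-(x * t)))).aestronglyMeasurable)
      (integrable_one_sub_exp μ hμ hl)
      ((by continuity : Continuous
        (fun t : ℝ => t ^ 1 * Real.exp (-(l * t)))).aestronglyMeasurable)
      ?_ (integrable_pow_exp μ hμ 1 le_rfl (half_pos hl)) ?_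
  · have hb : HasDerivAt (fun x : ℝ => b * x) b l := by
      simpa using HasDerivAt.const_mul b (hasDerivAt_id l)
    exact hb.add h.2
  · refine (ae_restrict_iff' measurableSet_Ioi).2 (Eventually.of_forall fun t ht x hx => ?_)
    have ht : 0 < t := ht
    have hx2 : l / 2 ≤ x := by
      have h1 : |x - l| < l / 2 := by
        have := mem_ball_iff_norm.1 hx
        simpa [Real.norm_eq_abs] using this
      linarith [(abs_lt.1 h1).1]
    rw [Real.norm_eq_abs, abs_of_nonneg (by positivity)]
    have : Real.exp (-(x * t)) ≤ Real.exp (-(l / 2 * t)) :=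
      Real.exp_le_exp.2 (by nlinarith)
    exact mul_le_mul_of_nonneg_left this (by positivity)
  · refine Eventually.of_forall fun t x _ => ?_
    have h1 : HasDerivAt (fun x : ℝ => -(x * t)) (-t) x := by
      simpa using ((hasDerivAt_id x).mul_const t).fun_neg
    have h2 := HasDerivAt.const_sub 1 h1.exp
    convert h2 using 1
    ring

lemma iter_formula (φ : ℝ → ℝ) (b : ℝ)
    (hμ : ∫⁻ t in Ioi (0 : ℝ), ENNReal.ofReal (min 1 t) ∂μ ≠ ⊤)
    (hφ : ∀ l > (0 : ℝ),
      φ l = b * l + ∫ t in Ioi (0 : ℝ), (1 - Real.exp (-(l * t))) ∂μ) :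
    ∀ n : ℕ, ∀ l > (0 : ℝ), iteratedDeriv (n + 1) φ l =
      (if n = 0 then b else 0) +
        (-1 : ℝ) ^ n * ∫ t in Ioi (0 : ℝ), t ^ (n + 1) * Real.exp (-(l * t)) ∂μ := by
  intro n
  induction n with
  | zero =>
    intro l hl
    rw [iteratedDeriv_one]
    have heq : φ =ᶠ[nhds l]
        fun x => b * x + ∫ t in Ioi (0 : ℝ), (1 - Real.exp (-(x * t))) ∂μ :=
      eventually_of_mem (isOpen_Ioi.mem_nhds hl) (fun x hx => hφ x hx)
    rw [heq.deriv_eq, (hasDerivAt_phi_repr μ hμ b hl).deriv]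
    simp
  | succ n ih =>
    intro l hl
    rw [iteratedDeriv_succ]
    have heq : iteratedDeriv (n + 1) φ =ᶠ[nhds l]
        fun x => (if n = 0 then b else 0) +
          (-1 : ℝ) ^ n * ∫ t in Ioi (0 : ℝ), t ^ (n + 1) * Real.exp (-(x * t)) ∂μ :=
      eventually_of_mem (isOpen_Ioi.mem_nhds hl) (fun x hx => ih x hx)
    rw [heq.deriv_eq]
    have h := HasDerivAt.const_add (if n = 0 then b else 0)
      (HasDerivAt.const_mul ((-1 : ℝ) ^ n) (hasDerivAt_int_pow μ hμ (n + 1) (by omega) hl))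
    rw [h.deriv, integral_neg]
    have : n + 1 ≠ 0 := by omega
    simp only [this, if_false, Nat.add_eq, pow_succ]
    ring

end BernsteinAux

/-- If `φ(λ) = bλ + ∫₀^∞ (1 - e^{-λt}) μ(dt)` with `b ≥ 0` and
`∫₀^∞ (1 ∧ t) μ(dt) < ∞`, then for every `n` there is `C(n)` with
`λ^n |φ^{(n)}(λ)| ≤ C(n) φ(λ)` for all `λ > 0`. -/
theorem bernstein_iteratedDeriv_bound (φ : ℝ → ℝ) (b : ℝ) (hb : 0 ≤ b)
    (μ : Measure ℝ)
    (hμ : ∫⁻ t in Set.Ioi (0 : ℝ), ENNReal.ofReal (min 1 t) ∂μ ≠ ⊤)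
    (hφ : ∀ l > (0 : ℝ),
      φ l = b * l + ∫ t in Set.Ioi (0 : ℝ), (1 - Real.exp (-(l * t))) ∂μ) :
    ∀ n : ℕ, ∃ C : ℝ, 0 < C ∧ ∀ l > (0 : ℝ),
      l ^ n * |iteratedDeriv n φ l| ≤ C * φ l := by
  -- basic positivity facts
  have hInt_nonneg : ∀ l > (0 : ℝ),
      0 ≤ ∫ t in Ioi (0 : ℝ), (1 - Real.exp (-(l * t))) ∂μ := by
    intro l hl
    refine setIntegral_nonneg measurableSet_Ioi fun t ht => ?_
    exact BernsteinAux.one_sub_exp_nonneg (mul_nonneg hl.le (le_of_lt ht))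
  have hφ_nonneg : ∀ l > (0 : ℝ), 0 ≤ φ l := by
    intro l hl
    rw [hφ l hl]
    have := hInt_nonneg l hl
    nlinarith
  intro n
  match n with
  | 0 =>
    refine ⟨1, one_pos, fun l hl => ?_⟩
    rw [iteratedDeriv_zero, pow_zero, one_mul, one_mul, abs_of_nonneg (hφ_nonneg l hl)]
  | m + 1 =>
    have hfpos : (0:ℝ) < (m + 1).factorial := by exact_mod_cast (m + 1).factorial_pos
    refine ⟨1 + 2 * (m + 1).factorial, by linarith, fun l hl => ?_⟩
    set I := ∫ t in Ioi (0 : ℝ), t ^ (m + 1) * Real.exp (-(l * t)) ∂μ with hI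
    have hI_nonneg : 0 ≤ I := by
      refine setIntegral_nonneg measurableSet_Ioi fun t ht => ?_
      have : (0 : ℝ) < t := ht
      positivity
    rw [BernsteinAux.iter_formula μ φ b hμ hφ m l hl]
    have habs : |(if m = 0 then b else 0) + (-1 : ℝ) ^ m * I| ≤
        (if m = 0 then b else 0) + I := by
      have h1 : |(-1 : ℝ) ^ m * I| = I := by
        rw [abs_mul, abs_pow, abs_neg, abs_one, one_pow, one_mul, abs_of_nonneg hI_nonneg]
      calc |(if m = 0 then b else 0) + (-1 : ℝ) ^ m * I|
          ≤ |if m = 0 then b else 0| + |(-1 : ℝ) ^ m * I| := abs_add_le _ _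
        _ = (if m = 0 then b else 0) + I := by
            rw [h1, abs_of_nonneg]; split <;> simp [hb]
    have hlpow : (0 : ℝ) < l ^ (m + 1) := pow_pos hl _
    have step1 : l ^ (m + 1) * |(if m = 0 then b else 0) + (-1 : ℝ) ^ m * I| ≤
        l ^ (m + 1) * ((if m = 0 then b else 0) + I) :=
      mul_le_mul_of_nonneg_left habs hlpow.le
    -- bound the b-term
    have hb_term : l ^ (m + 1) * (if m = 0 then b else 0) ≤ φ l := by
      rcases Nat.eq_zero_or_pos m with hm | hm
      · subst hm
        simp only [zero_add, pow_one, if_true, reduceIte]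
        rw [hφ l hl]
        have := hInt_nonneg l hl
        nlinarith
      · have : m ≠ 0 := hm.ne'
        simp only [if_neg this, mul_zero]
        exact hφ_nonneg l hl
    -- bound the integral term
    have hI_term : l ^ (m + 1) * I ≤ 2 * (m + 1).factorial * φ l := by
      have e1 : l ^ (m + 1) * I =
          ∫ t in Ioi (0 : ℝ), (l * t) ^ (m + 1) * Real.exp (-(l * t)) ∂μ := by
        rw [hI, ← integral_const_mul]
        congr 1
        ext t
        show l ^ (m + 1) * (t ^ (m + 1) * Real.exp (-(l * t))) =
          (l * t) ^ (m + 1) * Real.exp (-(l * t))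
        rw [mul_pow]; ring
      have hint1 : Integrable (fun t => (l * t) ^ (m + 1) * Real.exp (-(l * t)))
          (μ.restrict (Ioi 0)) := by
        have h := (BernsteinAux.integrable_pow_exp μ hμ (m + 1) (by omega) hl).const_mul
          (l ^ (m + 1))
        refine h.congr (Eventually.of_forall fun t => ?_)
        show l ^ (m + 1) * (t ^ (m + 1) * Real.exp (-(l * t))) =
          (l * t) ^ (m + 1) * Real.exp (-(l * t))
        rw [mul_pow]; ring
      have hint2 : Integrable (fun t => 2 * ((m + 1).factorial : ℝ) *
          (1 - Real.exp (-(l * t)))) (μ.restrict (Ioi 0)) :=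
        (BernsteinAux.integrable_one_sub_exp μ hμ hl).const_mul _
      have e2 : ∫ t in Ioi (0 : ℝ), (l * t) ^ (m + 1) * Real.exp (-(l * t)) ∂μ ≤
          ∫ t in Ioi (0 : ℝ), 2 * ((m + 1).factorial : ℝ) * (1 - Real.exp (-(l * t))) ∂μ := by
        refine integral_mono_ae hint1 hint2 ?_
        refine (ae_restrict_iff' measurableSet_Ioi).2 (Eventually.of_forall fun t ht => ?_)
        have ht : 0 < t := ht
        have hx : 0 < l * t := mul_pos hl ht
        calc (l * t) ^ (m + 1) * Real.exp (-(l * t))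
            ≤ (m + 1).factorial * min 1 (l * t) :=
              BernsteinAux.pow_exp_le_min (m + 1) (by omega) hx
          _ ≤ (m + 1).factorial * (2 * (1 - Real.exp (-(l * t)))) := by
              have := BernsteinAux.min_le_two_sub hx
              have hfnn : (0 : ℝ) ≤ (m + 1).factorial := by positivity
              nlinarith
          _ = 2 * ((m + 1).factorial : ℝ) * (1 - Real.exp (-(l * t))) := by ring
      have e3 : ∫ t in Ioi (0 : ℝ), 2 * ((m + 1).factorial : ℝ) *
          (1 - Real.exp (-(l * t))) ∂μ =
          2 * ((m + 1).factorial : ℝ) * ∫ t in Ioi (0 : ℝ), (1 - Real.exp (-(l * t))) ∂μ :=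
        integral_const_mul _ _
      have e4 : ∫ t in Ioi (0 : ℝ), (1 - Real.exp (-(l * t))) ∂μ ≤ φ l := by
        rw [hφ l hl]; nlinarith
      have hfnn : (0 : ℝ) ≤ 2 * ((m + 1).factorial : ℝ) := by positivity
      calc l ^ (m + 1) * I = _ := e1
        _ ≤ _ := e2
        _ = _ := e3
        _ ≤ 2 * (m + 1).factorial * φ l := mul_le_mul_of_nonneg_left e4 hfnn
    calc l ^ (m + 1) * |(if m = 0 then b else 0) + (-1 : ℝ) ^ m * I|
        ≤ l ^ (m + 1) * ((if m = 0 then b else 0) + I) := step1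
      _ = l ^ (m + 1) * (if m = 0 then b else 0) + l ^ (m + 1) * I := by ring
      _ ≤ φ l + 2 * (m + 1).factorial * φ l := add_le_add hb_term hI_term
      _ = (1 + 2 * (m + 1).factorial) * φ l := by ring
end

section
/- Let φ : (0,∞) → (0,∞) be an increasing bijection satisfying the lower scaling condition c₀ (R/r)^{δ₀} ≤ φ(R)/φ(r) for 0 < r < R with δ₀ ∈ (0,1], c₀ > 0. Fix d ∈ ℕ, k ∈ ℕ₀, ν > 0, and t > 0. Then ∫_{ℝ^d} min( t^{-νk} (φ^{-1}(t^{-1}))^{d/2}, t^{ν-νk} (φ(|x|^{-2}))^ν / |x|^d ) dx ≤ C t^{-νk}, where C depends only on d, c₀, δ₀, k, ν. -/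
open Set Filter MeasureTheory

/-- For `φ` an increasing bijection of `(0,∞)` with the lower scaling
condition, `∫_{ℝ^d} min(t^{-νk} (φ⁻¹(t⁻¹))^{d/2}, t^{ν-νk} (φ(|x|⁻²))^ν / |x|^d) dx
≤ C t^{-νk}` uniformly in `t > 0`. -/
theorem min_integral_heat_kernel_bound (d : ℕ) (hd : 0 < d)
    (φ φinv : ℝ → ℝ) (c₀ δ₀ : ℝ) (hc₀ : 0 < c₀) (hδ₀ : δ₀ ∈ Set.Ioc (0 : ℝ) 1)
    (hpos : ∀ x > (0 : ℝ), 0 < φ x)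
    (hmono : StrictMonoOn φ (Set.Ioi 0))
    (hbij : ∀ x > (0 : ℝ), 0 < φinv x ∧ φ (φinv x) = x)
    (hinv : ∀ x > (0 : ℝ), φinv (φ x) = x)
    (hsc : ∀ r R : ℝ, 0 < r → r < R → c₀ * (R / r) ^ δ₀ ≤ φ R / φ r)
    (k : ℕ) (ν : ℝ) (hν : 0 < ν) :
    ∃ C : ℝ, 0 < C ∧ ∀ t > (0 : ℝ),
      (∫ x : EuclideanSpace ℝ (Fin d),
        min (t ^ (-(ν * k)) * (φinv t⁻¹) ^ ((d : ℝ) / 2))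
          (t ^ (ν - ν * k) * (φ (‖x‖ ^ (-2 : ℝ))) ^ ν / ‖x‖ ^ (d : ℝ)))
      ≤ C * t ^ (-(ν * k)) := by
  obtain ⟨hδ₀pos, hδ₀le⟩ := hδ₀
  haveI : Nonempty (Fin d) := Fin.pos_iff_nonempty.mp hd
  set Bvol : ℝ := (volume (Metric.ball (0 : EuclideanSpace ℝ (Fin d)) 1)).toReal with hBvol
  have hBvolpos : 0 < Bvol := ENNReal.toReal_pos
    (Metric.measure_ball_pos volume 0 one_pos).ne' measure_ball_lt_top.ne
  set ε : ℝ := 2 * δ₀ * ν with hε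
  have hεpos : 0 < ε := by positivity
  set κ : ℝ := c₀ ^ (-ν) with hκ
  have hκpos : 0 < κ := Real.rpow_pos_of_pos hc₀ _
  have hdR : (0:ℝ) < d := Nat.cast_pos.mpr hd
  have hd1 : 1 ≤ d := hd
  refine ⟨d * Bvol * (1 / d + κ / ε), by positivity, ?_⟩
  intro t ht
  obtain ⟨hP, hφP⟩ := hbij t⁻¹ (inv_pos.mpr ht)
  set P : ℝ := φinv t⁻¹ with hPdef
  set a : ℝ := P ^ (-(1/2) : ℝ) with hadef
  have ha : 0 < a := Real.rpow_pos_of_pos hP _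
  have haP : a ^ (-2 : ℝ) = P := by
    rw [hadef, ← Real.rpow_mul hP.le]
    norm_num
  set A : ℝ := t ^ (-(ν * (k:ℝ))) * P ^ ((d:ℝ)/2) with hA
  have hApos : 0 < A := by
    have := Real.rpow_pos_of_pos ht (-(ν * (k:ℝ)))
    have := Real.rpow_pos_of_pos hP ((d:ℝ)/2)
    positivity
  set D : ℝ := t ^ (-(ν * (k:ℝ))) * κ * a ^ ε with hD
  have hDpos : 0 < D := by
    have := Real.rpow_pos_of_pos ht (-(ν * (k:ℝ)))
    have := Real.rpow_pos_of_pos ha ε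
    positivity
  set f : ℝ → ℝ := fun y => min (t ^ (-(ν * (k:ℝ))) * P ^ ((d:ℝ)/2))
      (t ^ (ν - ν * k) * (φ (y ^ (-2:ℝ))) ^ ν / y ^ (d:ℝ)) with hf
  -- reduction to a one-dimensional integral
  have hrw : (∫ x : EuclideanSpace ℝ (Fin d),
        min (t ^ (-(ν * (k:ℝ))) * P ^ ((d : ℝ) / 2))
          (t ^ (ν - ν * k) * (φ (‖x‖ ^ (-2 : ℝ))) ^ ν / ‖x‖ ^ (d : ℝ)))
      = (d:ℝ) * Bvol * ∫ y in Ioi (0:ℝ), y ^ (d - 1) * f y := by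
    have h := integral_fun_norm_addHaar (volume : Measure (EuclideanSpace ℝ (Fin d))) f
    rw [finrank_euclideanSpace_fin] at h
    simpa [hf, nsmul_eq_mul, smul_eq_mul, mul_assoc, hBvol, Measure.real] using h
  -- the key pointwise tail estimate
  have key : ∀ y : ℝ, a < y →
      y ^ (d-1) * (t ^ (ν - ν * k) * (φ (y ^ (-2:ℝ))) ^ ν / y ^ (d:ℝ))
        ≤ D * y ^ (-1-ε : ℝ) := by
    intro y hay
    have hy : 0 < y := ha.trans hay
    have hy2 : 0 < y ^ (-2:ℝ) := Real.rpow_pos_of_pos hy _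
    have hrlt : y ^ (-2:ℝ) < P := by
      rw [← haP]; exact Real.rpow_lt_rpow_of_neg ha hay (by norm_num)
    have hφr : 0 < φ (y ^ (-2:ℝ)) := hpos _ hy2
    have hw : 0 < (a/y) ^ (2*δ₀) := Real.rpow_pos_of_pos (div_pos ha hy) _
    have hXeq : (P / y ^ (-2:ℝ)) ^ δ₀ = ((a/y) ^ (2*δ₀))⁻¹ := by
      rw [← haP, ← Real.div_rpow ha.le hy.le,
        ← Real.rpow_mul (div_nonneg ha.le hy.le),
        show (-2:ℝ) * δ₀ = -(2*δ₀) by ring,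
        Real.rpow_neg (div_nonneg ha.le hy.le)]
    have h1 : c₀ * ((a/y) ^ (2*δ₀))⁻¹ * φ (y ^ (-2:ℝ)) ≤ t⁻¹ := by
      have h := hsc _ P hy2 hrlt
      rw [hφP, hXeq] at h
      exact (le_div_iff₀ hφr).mp h
    have h2 : φ (y ^ (-2:ℝ)) ≤ t⁻¹ * c₀⁻¹ * ((a/y) ^ (2*δ₀)) := by
      calc φ (y ^ (-2:ℝ))
          = (c₀ * ((a/y) ^ (2*δ₀))⁻¹ * φ (y ^ (-2:ℝ))) * (c₀⁻¹ * (a/y) ^ (2*δ₀)) := by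
            field_simp
        _ ≤ t⁻¹ * (c₀⁻¹ * (a/y) ^ (2*δ₀)) := by
            apply mul_le_mul_of_nonneg_right h1 (by positivity)
        _ = t⁻¹ * c₀⁻¹ * ((a/y) ^ (2*δ₀)) := by ring
    have h3 : (φ (y ^ (-2:ℝ))) ^ ν ≤ t ^ (-ν) * κ * (a/y) ^ ε := by
      calc (φ (y ^ (-2:ℝ))) ^ ν ≤ (t⁻¹ * c₀⁻¹ * ((a/y) ^ (2*δ₀))) ^ ν :=
            Real.rpow_le_rpow hφr.le h2 hν.le
        _ = t ^ (-ν) * κ * (a/y) ^ ε := by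
            rw [Real.mul_rpow (by positivity) (by positivity),
              Real.mul_rpow (by positivity) (by positivity),
              Real.inv_rpow ht.le, ← Real.rpow_neg ht.le,
              Real.inv_rpow hc₀.le, ← Real.rpow_neg hc₀.le,
              ← Real.rpow_mul (div_nonneg ha.le hy.le), ← hκ, hε]
    have ht1 : t ^ (ν - ν*(k:ℝ)) * t ^ (-ν) = t ^ (-(ν*(k:ℝ))) := by
      rw [← Real.rpow_add ht]; congr 1; ring
    have hy1 : y ^ ((d:ℝ)-1) / (y ^ ε * y ^ (d:ℝ)) = y ^ ((-1:ℝ)-ε) := by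
      rw [← Real.rpow_add hy, ← Real.rpow_sub hy]; congr 1; ring
    calc y ^ (d-1) * (t ^ (ν - ν * k) * (φ (y ^ (-2:ℝ))) ^ ν / y ^ (d:ℝ))
        ≤ y ^ (d-1) * (t ^ (ν - ν * k) * (t ^ (-ν) * κ * (a/y) ^ ε) / y ^ (d:ℝ)) := by
          gcongr
      _ = (t ^ (ν - ν*(k:ℝ)) * t ^ (-ν)) * κ * a ^ ε
            * (y ^ ((d:ℝ)-1) / (y ^ ε * y ^ (d:ℝ))) := by
          rw [Real.div_rpow ha.le hy.le, ← Real.rpow_natCast y (d-1), Nat.cast_sub hd1]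
          push_cast
          ring
      _ = D * y ^ ((-1:ℝ)-ε) := by rw [ht1, hy1, hD]
      _ = D * y ^ (-1-ε : ℝ) := by norm_num
  -- the dominating function
  have hint1 : Integrable ((Ioc (0:ℝ) a).indicator fun y => A * y ^ (d-1)) volume :=
    ((continuous_const.mul (continuous_pow (d-1))).integrableOn_Ioc).integrable_indicator
      measurableSet_Ioc
  have hIO2 : IntegrableOn (fun y => D * y ^ (-1-ε : ℝ)) (Ioi a) volume :=
    (integrableOn_Ioi_rpow_of_lt (show -1-ε < (-1:ℝ) by linarith) ha).const_mul D
  have hint2 : Integrable ((Ioi a).indicator fun y => D * y ^ (-1-ε : ℝ)) volume :=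
    hIO2.integrable_indicator measurableSet_Ioi
  set g : ℝ → ℝ := fun y => (Ioc (0:ℝ) a).indicator (fun y => A * y ^ (d-1)) y
      + (Ioi a).indicator (fun y => D * y ^ (-1-ε:ℝ)) y with hg
  have hgint : Integrable g (volume.restrict (Ioi (0:ℝ))) := (hint1.add hint2).restrict
  have hnn : 0 ≤ᵐ[volume.restrict (Ioi (0:ℝ))] fun y => y ^ (d-1) * f y := by
    filter_upwards [ae_restrict_mem measurableSet_Ioi] with y hy
    have hy' : (0:ℝ) < y := hy
    have hφr : 0 < φ (y ^ (-2:ℝ)) := hpos _ (Real.rpow_pos_of_pos hy' _)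
    have h2 : 0 < t ^ (ν - ν * k) * (φ (y ^ (-2:ℝ))) ^ ν / y ^ (d:ℝ) := by
      have := Real.rpow_pos_of_pos ht (ν - ν * k)
      have := Real.rpow_pos_of_pos hφr ν
      have := Real.rpow_pos_of_pos hy' (d:ℝ)
      positivity
    have : 0 ≤ f y := le_min hApos.le h2.le
    positivity
  have hle : (fun y => y ^ (d-1) * f y) ≤ᵐ[volume.restrict (Ioi (0:ℝ))] g := by
    filter_upwards [ae_restrict_mem measurableSet_Ioi] with y hy
    have hy' : (0:ℝ) < y := hy
    rcases le_or_gt y a with hya | hay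
    · have h01 : (Ioc (0:ℝ) a).indicator (fun y => A * y ^ (d-1)) y = A * y ^ (d-1) :=
        Set.indicator_of_mem (mem_Ioc.mpr ⟨hy', hya⟩) _
      have h02 : 0 ≤ (Ioi a).indicator (fun y => D * y ^ (-1-ε:ℝ)) y :=
        indicator_nonneg (fun z hz => by
          have hz' : (0:ℝ) < z := ha.trans hz
          positivity) y
      calc y ^ (d-1) * f y ≤ y ^ (d-1) * A :=
            mul_le_mul_of_nonneg_left (min_le_left _ _) (by positivity)
        _ = A * y ^ (d-1) := mul_comm _ _
        _ ≤ g y := by rw [hg]; simp only; rw [h01]; linarith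
    · have h01 : (Ioc (0:ℝ) a).indicator (fun y => A * y ^ (d-1)) y = 0 :=
        Set.indicator_of_notMem (fun h => absurd h.2 (not_le.mpr hay)) _
      have h02 : (Ioi a).indicator (fun y => D * y ^ (-1-ε:ℝ)) y = D * y ^ (-1-ε:ℝ) :=
        Set.indicator_of_mem hay _
      calc y ^ (d-1) * f y
          ≤ y ^ (d-1) * (t ^ (ν - ν * k) * (φ (y ^ (-2:ℝ))) ^ ν / y ^ (d:ℝ)) :=
            mul_le_mul_of_nonneg_left (min_le_right _ _) (by positivity)
        _ ≤ D * y ^ (-1-ε:ℝ) := key y hay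
        _ = g y := by rw [hg]; simp only; rw [h01, h02]; ring
  have hmain := integral_mono_of_nonneg hnn hgint hle
  -- compute the integral of g
  have hg1 : (∫ y in Ioi (0:ℝ), (Ioc (0:ℝ) a).indicator (fun y => A * y ^ (d-1)) y)
      = A * (a ^ d / d) := by
    rw [setIntegral_indicator measurableSet_Ioc,
      inter_eq_self_of_subset_right Ioc_subset_Ioi_self, integral_const_mul,
      ← intervalIntegral.integral_of_le ha.le, integral_pow, Nat.sub_add_cancel hd1]
    rw [zero_pow hd.ne', Nat.cast_sub hd1]
    push_cast
    ring
  have hg2 : (∫ y in Ioi (0:ℝ), (Ioi a).indicator (fun y => D * y ^ (-1-ε:ℝ)) y)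
      = D * (a ^ (-ε:ℝ) / ε) := by
    rw [setIntegral_indicator measurableSet_Ioi,
      inter_eq_self_of_subset_right (Ioi_subset_Ioi ha.le), integral_const_mul,
      integral_Ioi_rpow_of_lt (by linarith) ha,
      show (-1-ε) + 1 = -ε by ring]
    rw [neg_div, div_neg, neg_neg]
  have hAa : A * a ^ d = t ^ (-(ν*(k:ℝ))) := by
    rw [hA, hadef, ← Real.rpow_natCast (P ^ (-(1/2):ℝ)) d, ← Real.rpow_mul hP.le,
      mul_assoc, ← Real.rpow_add hP, show (d:ℝ)/2 + (-(1/2))*d = 0 by ring,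
      Real.rpow_zero, mul_one]
  have hDa : D * a ^ (-ε:ℝ) = t ^ (-(ν*(k:ℝ))) * κ := by
    rw [hD, mul_assoc, ← Real.rpow_add ha, add_neg_cancel, Real.rpow_zero, mul_one]
  have hIle : (∫ y in Ioi (0:ℝ), y ^ (d-1) * f y)
      ≤ t ^ (-(ν * (k:ℝ))) * (1/d + κ/ε) := by
    calc (∫ y in Ioi (0:ℝ), y ^ (d-1) * f y) ≤ ∫ y in Ioi (0:ℝ), g y := hmain
      _ = A * (a ^ d / d) + D * (a ^ (-ε:ℝ) / ε) := by
          rw [hg, integral_add hint1.restrict hint2.restrict, hg1, hg2]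
      _ = (A * a ^ d) * (1/(d:ℝ)) + (D * a ^ (-ε:ℝ)) * (1/ε) := by ring
      _ = t ^ (-(ν * (k:ℝ))) * (1/d + κ/ε) := by rw [hAa, hDa]; ring
  rw [show (∫ x : EuclideanSpace ℝ (Fin d),
        min (t ^ (-(ν * (k:ℝ))) * P ^ ((d : ℝ) / 2))
          (t ^ (ν - ν * k) * (φ (‖x‖ ^ (-2 : ℝ))) ^ ν / ‖x‖ ^ (d : ℝ)))
      = (d:ℝ) * Bvol * ∫ y in Ioi (0:ℝ), y ^ (d - 1) * f y from hrw]
  calc (d:ℝ) * Bvol * ∫ y in Ioi (0:ℝ), y ^ (d - 1) * f y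
      ≤ (d:ℝ) * Bvol * (t ^ (-(ν * (k:ℝ))) * (1/d + κ/ε)) :=
        mul_le_mul_of_nonneg_left hIle (by positivity)
    _ = (d * Bvol * (1/d + κ/ε)) * t ^ (-(ν * (k:ℝ))) := by ring
end

section
/- Let φ₁,…,φ_ℓ be Bernstein functions, each satisfying the lower scaling condition with common constants c₀ > 0, δ₀ ∈ (0,1], and suppose a Bernstein function φ_n satisfies sup_{r>1} φ_n(r)/φ_i(r) ≤ C_i for all i = 1,…,ℓ. Then there is a constant C such that for all ξ = (ξ₁,…,ξ_ℓ) ∈ ℝ^{d₁}×⋯×ℝ^{d_ℓ} with |ξ| ≥ 2, φ_n(|ξ|²) / (1 + φ₁(|ξ₁|²) + ⋯ + φ_ℓ(|ξ_ℓ|²)) ≤ C. -/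
open Set Filter

/-- A Bernstein function: positive on `(0,∞)`, smooth there, `φ(0+) = 0`, and
`(-1)^n φ^{(n)} ≤ 0` on `(0,∞)` for all `n ≥ 1`. -/
def IsBernstein (φ : ℝ → ℝ) : Prop :=
  (∀ x > (0 : ℝ), 0 < φ x) ∧ ContDiffOn ℝ (⊤ : ℕ∞) φ (Set.Ioi 0) ∧
    Filter.Tendsto φ (nhdsWithin 0 (Set.Ioi 0)) (nhds 0) ∧
    ∀ n : ℕ, 1 ≤ n → ∀ x > (0 : ℝ), (-1 : ℝ) ^ n * iteratedDeriv n φ x ≤ 0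

lemma bernstein_concave {φ : ℝ → ℝ} (h : IsBernstein φ) : ConcaveOn ℝ (Set.Ioi 0) φ := by
  obtain ⟨hpos, hsm, hlim, hder⟩ := h
  have hopen : IsOpen (Set.Ioi (0:ℝ)) := isOpen_Ioi
  have hint : interior (Set.Ioi (0:ℝ)) = Set.Ioi 0 := hopen.interior_eq
  have hd1 : DifferentiableOn ℝ φ (Set.Ioi 0) :=
    hsm.differentiableOn (by simp)
  have hd2 : DifferentiableOn ℝ (deriv φ) (Set.Ioi 0) := by
    have := hsm.deriv_of_isOpen (m := (⊤:ℕ∞)) hopen (by simp)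
    exact this.differentiableOn (by simp)
  refine concaveOn_of_deriv2_nonpos (convex_Ioi 0) hsm.continuousOn
    (by rwa [hint]) (by rwa [hint]) ?_
  intro x hx
  rw [hint] at hx
  have := hder 2 (by norm_num) x hx
  simpa [iteratedDeriv_succ, iteratedDeriv_one, Function.iterate_succ, Function.comp] using this

/-- `t * φ S ≤ S * φ t` for `0 < t ≤ S`. -/
lemma bernstein_scale {φ : ℝ → ℝ} (h : IsBernstein φ) {t S : ℝ}
    (ht : 0 < t) (hts : t ≤ S) : t * φ S ≤ S * φ t := by
  rcases eq_or_lt_of_le hts with rfl | hlt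
  · exact le_rfl
  have hconc := bernstein_concave h
  have hS : (0:ℝ) < S := ht.trans hlt
  have hlim := h.2.2.1
  -- g a → (t * φ S) / S  as a → 0+
  have hgt : Tendsto (fun a => ((S - t) * φ a + (t - a) * φ S) / (S - a))
      (nhdsWithin 0 (Set.Ioi 0)) (nhds ((t * φ S) / S)) := by
    have : Tendsto (fun a => ((S - t) * φ a + (t - a) * φ S) / (S - a))
        (nhdsWithin 0 (Set.Ioi 0))
        (nhds (((S - t) * 0 + (t - 0) * φ S) / (S - 0))) := by
      apply Tendsto.div
      · exact (Tendsto.mul tendsto_const_nhds hlim).add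
          (((tendsto_const_nhds.sub (tendsto_nhdsWithin_of_tendsto_nhds tendsto_id)).mul
            tendsto_const_nhds))
      · exact tendsto_const_nhds.sub (tendsto_nhdsWithin_of_tendsto_nhds tendsto_id)
      · simpa using hS.ne'
    simpa using this
  have hev : ∀ᶠ a in nhdsWithin 0 (Set.Ioi 0),
      ((S - t) * φ a + (t - a) * φ S) / (S - a) ≤ φ t := by
    filter_upwards [Ioo_mem_nhdsGT_of_mem (Set.left_mem_Ico.2 ht)] with a ha
    have ha0 : 0 < a := ha.1
    have hat : a < t := ha.2
    have hSa : 0 < S - a := by linarith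
    have w1 : (0:ℝ) ≤ (S - t) / (S - a) := div_nonneg (by linarith) (by linarith)
    have w2 : (0:ℝ) ≤ (t - a) / (S - a) := div_nonneg (by linarith) (by linarith)
    have wsum : (S - t) / (S - a) + (t - a) / (S - a) = 1 := by
      field_simp; ring
    have hcomb := hconc.2 (Set.mem_Ioi.2 ha0) (Set.mem_Ioi.2 hS) w1 w2 wsum
    have hpt : ((S - t) / (S - a)) • a + ((t - a) / (S - a)) • S = t := by
      rw [smul_eq_mul, smul_eq_mul]; field_simp; ring
    rw [hpt] at hcomb
    calc ((S - t) * φ a + (t - a) * φ S) / (S - a)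
        = ((S - t) / (S - a)) • φ a + ((t - a) / (S - a)) • φ S := by
          rw [smul_eq_mul, smul_eq_mul, div_mul_eq_mul_div, div_mul_eq_mul_div,
            add_div]
      _ ≤ φ t := hcomb
  have := le_of_tendsto hgt hev
  rw [div_le_iff₀ hS] at this
  linarith

/-- if Bernstein functions `φ₁,…,φ_ℓ` satisfy a common lower scaling
condition (and vanish at `0`), and a Bernstein function `φₙ` satisfies
`sup_{r>1} φₙ(r)/φᵢ(r) ≤ Cᵢ` for each `i`, then
`φₙ(|ξ|²)/(1 + Σᵢ φᵢ(|ξᵢ|²)) ≤ C` uniformly over `|ξ| ≥ 2`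
(i.e. `Σᵢ |ξᵢ|² ≥ 4`). -/
theorem phi_n_ratio_bounded (ℓ : ℕ) (hℓ : 0 < ℓ) (d : Fin ℓ → ℕ)
    (φ : Fin ℓ → ℝ → ℝ) (φn : ℝ → ℝ) (c₀ δ₀ : ℝ)
    (hc₀ : 0 < c₀) (hδ₀ : δ₀ ∈ Set.Ioc (0 : ℝ) 1)
    (hB : ∀ i, IsBernstein (φ i)) (hφ0 : ∀ i, φ i 0 = 0)
    (hBn : IsBernstein φn)
    (hsc : ∀ i, ∀ r R : ℝ, 0 < r → r < R → c₀ * (R / r) ^ δ₀ ≤ φ i R / φ i r)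
    (Cc : Fin ℓ → ℝ)
    (hsup : ∀ i, ∀ r > (1 : ℝ), φn r / φ i r ≤ Cc i) :
    ∃ C : ℝ, 0 < C ∧ ∀ ξ : (∀ i, EuclideanSpace ℝ (Fin (d i))),
      4 ≤ ∑ i, ‖ξ i‖ ^ 2 →
      φn (∑ i, ‖ξ i‖ ^ 2) / (1 + ∑ i, φ i (‖ξ i‖ ^ 2)) ≤ C := by

  have hℝℓ : (0:ℝ) < ℓ := by exact_mod_cast hℓ
  have hne : (Finset.univ : Finset (Fin ℓ)).Nonempty := ⟨⟨0, hℓ⟩, Finset.mem_univ _⟩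
  set M := Finset.univ.sup' hne Cc with hM
  have hCcpos : ∀ i, 0 < Cc i := by
    intro i
    have h2 : (1:ℝ) < 2 := one_lt_two
    have := hsup i 2 h2
    have hn2 : 0 < φn 2 := hBn.1 2 (by norm_num)
    have hi2 : 0 < φ i 2 := (hB i).1 2 (by norm_num)
    exact lt_of_lt_of_le (div_pos hn2 hi2) this
  have hMpos : 0 < M := lt_of_lt_of_le (hCcpos ⟨0, hℓ⟩) (Finset.le_sup' Cc (Finset.mem_univ _))
  refine ⟨ℓ * M, by positivity, ?_⟩
  intro ξ hS4
  set S := ∑ i, ‖ξ i‖ ^ 2 with hSdef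
  set T : Fin ℓ → ℝ := fun i => ‖ξ i‖ ^ 2 with hT
  have hTnn : ∀ i, 0 ≤ T i := fun i => sq_nonneg _
  have hφTnn : ∀ i, 0 ≤ φ i (T i) := by
    intro i
    rcases eq_or_lt_of_le (hTnn i) with h0 | h0
    · rw [← h0, hφ0 i]
    · exact le_of_lt ((hB i).1 _ h0)
  have hden : (0:ℝ) < 1 + ∑ i, φ i (T i) := by
    have : 0 ≤ ∑ i, φ i (T i) := Finset.sum_nonneg fun i _ => hφTnn i
    linarith
  obtain ⟨j, -, hj⟩ := Finset.exists_max_image (Finset.univ : Finset (Fin ℓ)) T hne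
  have hSle : S ≤ ℓ * T j := by
    calc S = ∑ i, T i := rfl
      _ ≤ ∑ _i : Fin ℓ, T j := Finset.sum_le_sum fun i _ => hj i (Finset.mem_univ i)
      _ = ℓ * T j := by rw [Finset.sum_const, Finset.card_univ, Fintype.card_fin,
            nsmul_eq_mul]
  have hSpos : (0:ℝ) < S := by linarith
  have hTj : 0 < T j := by
    rcases eq_or_lt_of_le (hTnn j) with h0 | h0
    · exfalso; rw [← h0] at hSle; simp at hSle; linarith
    · exact h0
  have hS1 : (1:ℝ) < S := by linarith
  have hφjS : 0 < φ j S := (hB j).1 S hSpos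
  have hφjT : 0 < φ j (T j) := (hB j).1 _ hTj
  -- φn S ≤ Cc j * φ j S
  have h1 : φn S ≤ Cc j * φ j S := by
    have := hsup j S hS1
    rwa [div_le_iff₀ hφjS] at this
  -- T j * φ j S ≤ S * φ j (T j), so φ j S ≤ ℓ * φ j (T j)
  have h2 : φ j S ≤ ℓ * φ j (T j) := by
    have hsc2 := bernstein_scale (hB j) hTj (Finset.single_le_sum (f := T) (fun i _ => hTnn i) (Finset.mem_univ j))
    have : S * φ j (T j) ≤ (ℓ * T j) * φ j (T j) :=
      mul_le_mul_of_nonneg_right hSle (le_of_lt hφjT)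
    have h3 : T j * φ j S ≤ (ℓ * T j) * φ j (T j) := le_trans hsc2 this
    have := (mul_le_mul_iff_right₀ hTj).mp (by linarith : T j * φ j S ≤ T j * (ℓ * φ j (T j)))
    linarith
  have h3 : φ j (T j) ≤ 1 + ∑ i, φ i (T i) := by
    have := Finset.single_le_sum (f := fun i => φ i (T i)) (fun i _ => hφTnn i)
      (Finset.mem_univ j)
    linarith
  have hCj : Cc j ≤ M := Finset.le_sup' Cc (Finset.mem_univ j)
  rw [div_le_iff₀ hden]
  calc φn S ≤ Cc j * φ j S := h1
    _ ≤ Cc j * (ℓ * φ j (T j)) := by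
        exact mul_le_mul_of_nonneg_left h2 (le_of_lt (hCcpos j))
    _ ≤ M * (ℓ * (1 + ∑ i, φ i (T i))) := by
        have h4 : (ℓ:ℝ) * φ j (T j) ≤ ℓ * (1 + ∑ i, φ i (T i)) :=
          mul_le_mul_of_nonneg_left h3 (le_of_lt hℝℓ)
        have h5 : 0 ≤ (ℓ:ℝ) * φ j (T j) := by positivity
        exact mul_le_mul hCj h4 h5 (le_of_lt hMpos)
    _ = ℓ * M * (1 + ∑ i, φ i (T i)) := by ring
end
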